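/- arXiv:1208.1430 — 4 statements merged into one kernel-verified Lean document; each statement's English description precedes it below -/
import Mathlib

section
/- Let u ∈ ℤ² ∖ {0}, let s ≥ 0 be a real number, and let ε ∈ {−1, 1}. Then the set {v ∈ ℤ² : ‖u‖ < ‖v‖, 0 ≤ ⟨u,v⟩ < s, det(u,v) = ε} is finite and has cardinality at most s/‖u‖². -/
open scoped RealInnerProductSpace
open MeasureTheory Real

noncomputable section

abbrev E2 : Type := EuclideanSpace ℝ (Fin 2)

def mk2 (a b : ℝ) : E2 := !₂[a, b]

def IsAsymNorm (F : E2 → ℝ) : Prop :=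
  ConvexOn ℝ Set.univ F ∧
  (∀ (c : ℝ), 0 ≤ c → ∀ u : E2, F (c • u) = c * F u) ∧
  (∀ u : E2, 0 ≤ F u) ∧
  (∀ u : E2, u ≠ 0 → 0 < F u)

def IsAcute (F : E2 → ℝ) (u v : E2) : Prop :=
  ∀ δ : ℝ, 0 ≤ δ → F u ≤ F (u + δ • v) ∧ F v ≤ F (v + δ • u)

noncomputable def kappa (F : E2 → ℝ) : ℝ :=
  sSup {r : ℝ | ∃ u v : E2, ‖u‖ = 1 ∧ ‖v‖ = 1 ∧ r = F u / F v}

def det2 (u v : E2) : ℝ := u 0 * v 1 - u 1 * v 0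

def IsIntVec (u : E2) : Prop := (∃ n : ℤ, u 0 = (n : ℝ)) ∧ (∃ n : ℤ, u 1 = (n : ℝ))

def eTheta (θ : ℝ) : E2 := mk2 (Real.cos θ) (Real.sin θ)

noncomputable def phiF (F : E2 → ℝ) (θ : ℝ) : ℝ :=
  Real.arctan (det2 (eTheta θ) (gradient F (eTheta θ)) / F (eTheta θ))

def rot2 (θ : ℝ) (w : E2) : E2 :=
  mk2 (Real.cos θ * w 0 - Real.sin θ * w 1) (Real.sin θ * w 0 + Real.cos θ * w 1)

def perp (z : E2) : E2 := mk2 (-(z 1)) (z 0)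

/-- for `u ∈ ℤ² ∖ {0}`, `s ≥ 0` and `ε ∈ {-1,1}`, the set
`{v ∈ ℤ² : ‖u‖ < ‖v‖, 0 ≤ ⟨u,v⟩ < s, det(u,v) = ε}` is finite with at most
`s / ‖u‖²` elements. -/
theorem stmt4 (u : E2) (hu : IsIntVec u) (hu0 : u ≠ 0) (s : ℝ) (hs : 0 ≤ s)
    (ε : ℝ) (hε : ε = -1 ∨ ε = 1) :
    {v : E2 | IsIntVec v ∧ ‖u‖ < ‖v‖ ∧ 0 ≤ ⟪u, v⟫ ∧ ⟪u, v⟫ < s ∧ det2 u v = ε}.Finite ∧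
    ({v : E2 | IsIntVec v ∧ ‖u‖ < ‖v‖ ∧ 0 ≤ ⟪u, v⟫ ∧ ⟪u, v⟫ < s ∧ det2 u v = ε}.ncard : ℝ)
      ≤ s / ‖u‖ ^ 2 := by
  have inner2 : ∀ v w : E2, ⟪v, w⟫ = v 0 * w 0 + v 1 * w 1 := fun v w => by
    simp [PiLp.inner_apply, Fin.sum_univ_two, RCLike.inner_apply, mul_comm]
  obtain ⟨⟨a, ha⟩, ⟨b, hb⟩⟩ := hu
  set S := {v : E2 | IsIntVec v ∧ ‖u‖ < ‖v‖ ∧ 0 ≤ ⟪u, v⟫ ∧ ⟪u, v⟫ < s ∧ det2 u v = ε}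
    with hS
  set m : ℤ := a ^ 2 + b ^ 2 with hm_def
  have hmR : (m : ℝ) = ‖u‖ ^ 2 := by
    rw [← real_inner_self_eq_norm_sq, inner2, ha, hb, hm_def]; push_cast; ring
  have hm1 : 1 ≤ m := by
    have h0 : (0 : ℝ) < ‖u‖ ^ 2 := pow_pos (norm_pos_iff.mpr hu0) 2
    rw [← hmR] at h0; exact_mod_cast h0
  have hm0 : (m : ℤ) ≠ 0 := by omega
  have hmRpos : (0 : ℝ) < (m : ℝ) := by exact_mod_cast hm1
  set e : ℤ := if ε = 1 then 1 else -1 with he_def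
  have heR : (e : ℝ) = ε := by
    rcases hε with h | h <;> norm_num [he_def, h]
  have he2 : e * e = 1 := by
    rcases hε with h | h <;> norm_num [he_def, h]
  set K : ℤ := ⌈s / (m : ℝ)⌉ with hK_def
  clear_value m e K
  set g : E2 → ℤ := fun v => ⌊⟪u, v⟫⌋ / m with hg_def
  -- per-element facts
  have key : ∀ v ∈ S, ∃ x y n : ℤ, v 0 = (x : ℝ) ∧ v 1 = (y : ℝ) ∧
      ⌊⟪u, v⟫⌋ = n ∧
      m ≤ n ∧ (n : ℝ) < s ∧ m * x = a * n - b * e ∧ m * y = b * n + a * e := by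
    rintro v ⟨⟨⟨x, hx⟩, ⟨y, hy⟩⟩, hnorm, hip0, hips, hdet⟩
    set n : ℤ := a * x + b * y with hn_def
    have hipn : ⟪u, v⟫ = ((n : ℤ) : ℝ) := by
      rw [inner2, ha, hb, hx, hy, hn_def]; push_cast; ring
    have hdetZ : a * y - b * x = e := by
      have : ((a * y - b * x : ℤ) : ℝ) = (e : ℝ) := by
        rw [heR, ← hdet]; unfold det2; rw [ha, hb, hx, hy]; push_cast; ring
      exact_mod_cast this
    have hn0 : 0 ≤ n := by
      have : (0 : ℝ) ≤ ((n : ℤ) : ℝ) := hipn ▸ hip0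
      exact_mod_cast this
    refine ⟨x, y, n, hx, hy, by rw [hipn, Int.floor_intCast], ?_, ?_, ?_, ?_⟩
    · -- m ≤ n
      have hvnorm : ‖v‖ ^ 2 = ((x ^ 2 + y ^ 2 : ℤ) : ℝ) := by
        rw [← real_inner_self_eq_norm_sq, inner2, hx, hy]; push_cast; ring
      have hlt : m < x ^ 2 + y ^ 2 := by
        have h1 : (m : ℝ) < ((x ^ 2 + y ^ 2 : ℤ) : ℝ) := by
          rw [hmR, ← hvnorm]
          nlinarith [norm_nonneg v, norm_nonneg u]
        exact_mod_cast h1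
      have hident : n ^ 2 + e ^ 2 = m * (x ^ 2 + y ^ 2) := by
        rw [← hdetZ, hn_def, hm_def]; ring
      nlinarith [he2]
    · rw [← hipn]; exact hips
    · linear_combination (x : ℤ) * hm_def + (-b : ℤ) * hdetZ + (a : ℤ) * hn_def
    · linear_combination (y : ℤ) * hm_def + (a : ℤ) * hdetZ + (b : ℤ) * hn_def
  -- injectivity of g on S
  have hinj : Set.InjOn g S := by
    intro v hv w hw hgvw
    obtain ⟨x, y, n, hx, hy, hfl, hmn, hns, hmx, hmy⟩ := key v hv
    obtain ⟨x', y', n', hx', hy', hfl', hmn', hns', hmx', hmy'⟩ := key w hw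
    have hq : n / m = n' / m := by
      simp only [hg_def] at hgvw
      rw [hfl, hfl'] at hgvw
      exact hgvw
    -- coprimality of m and a
    have hdetZ : a * y - b * x = e := by
      have h1 : m * (a * y - b * x) = m * e := by linear_combination a * hmy - b * hmx - e * hm_def
      exact mul_left_cancel₀ hm0 h1
    have hab : IsCoprime a b := ⟨e * y, -(e * x), by linear_combination e * hdetZ + he2⟩
    have ham : IsCoprime m a := by
      have h1 : IsCoprime a (b ^ 2 + a * a) := (hab.pow_right).add_mul_left_right a
      have h2 : m = b ^ 2 + a * a := by rw [hm_def]; ring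
      exact (h2 ▸ h1).symm
    have hdvd : m ∣ (n - n') := by
      refine ham.dvd_of_dvd_mul_left ⟨x - x', ?_⟩
      linear_combination hmx' - hmx
    obtain ⟨k, hk⟩ := hdvd
    have hnn' : n = n' := by
      have h1 : n = n' + m * k := by linarith
      have h2 : n / m = n' / m + k := by
        rw [h1, mul_comm, Int.add_mul_ediv_right _ _ hm0]
      have hk0 : k = 0 := by rw [hq] at h2; omega
      subst hk0
      simp at hk
      omega
    have hxx : x = x' := mul_left_cancel₀ hm0 (by rw [hmx, hmx', hnn'])
    have hyy : y = y' := mul_left_cancel₀ hm0 (by rw [hmy, hmy', hnn'])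
    refine PiLp.ext fun i => ?_
    fin_cases i
    · rw [show (⟨0, by norm_num⟩ : Fin 2) = 0 from rfl, hx, hx', hxx]
    · rw [show (⟨1, by norm_num⟩ : Fin 2) = 1 from rfl, hy, hy', hyy]
  -- image is in Ico 1 K
  have himg : ∀ v ∈ S, g v ∈ Finset.Ico 1 K := by
    intro v hv
    obtain ⟨x, y, n, hx, hy, hfl, hmn, hns, hmx, hmy⟩ := key v hv
    have hgv : g v = n / m := by simp only [hg_def]; rw [hfl]
    rw [Finset.mem_Ico, hgv]
    constructor
    · rw [Int.le_ediv_iff_mul_le (by omega)]; omega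
    · rw [hK_def, Int.lt_ceil]
      have h1 : (n / m) * m ≤ n := Int.ediv_mul_le n hm0
      have h2 : ((n / m : ℤ) : ℝ) * (m : ℝ) ≤ (n : ℝ) := by exact_mod_cast h1
      rw [lt_div_iff₀ hmRpos]
      linarith
  have himgset : g '' S ⊆ ↑(Finset.Ico 1 K) := by
    rintro _ ⟨v, hv, rfl⟩; exact_mod_cast himg v hv
  have hfin : S.Finite :=
    Set.Finite.of_finite_image (Set.Finite.subset (Finset.finite_toSet _) himgset) hinj
  refine ⟨hfin, ?_⟩
  have hcard : S.ncard ≤ (K - 1).toNat := by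
    calc S.ncard = (g '' S).ncard := (Set.ncard_image_of_injOn hinj).symm
    _ ≤ (↑(Finset.Ico 1 K) : Set ℤ).ncard :=
        Set.ncard_le_ncard himgset (Finset.finite_toSet _)
    _ = (Finset.Ico 1 K).card := Set.ncard_coe_finset _
    _ = (K - 1).toNat := Int.card_Ico 1 K
  have hfinal : ((K - 1).toNat : ℝ) ≤ s / (m : ℝ) := by
    rcases le_or_gt K 1 with h | h
    · have : (K - 1).toNat = 0 := by omega
      rw [this]; simpa using div_nonneg hs hmRpos.le
    · have h1 : ((K - 1).toNat : ℤ) = K - 1 := by omega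
      have h2 : ((K - 1 : ℤ) : ℝ) ≤ s / (m : ℝ) := by
        have := Int.ceil_lt_add_one (s / (m : ℝ))
        rw [hK_def] at *; push_cast; linarith
      calc ((K - 1).toNat : ℝ) = ((K - 1 : ℤ) : ℝ) := by exact_mod_cast h1
      _ ≤ s / (m : ℝ) := h2
  calc (S.ncard : ℝ) ≤ ((K - 1).toNat : ℝ) := by exact_mod_cast hcard
  _ ≤ s / (m : ℝ) := hfinal
  _ = s / ‖u‖ ^ 2 := by rw [hmR]
end
end

section
/- Let F be an asymmetric norm on ℝ² with anisotropy ratio κ(F), and let u, v ∈ ℝ² ∖ {0}. If ⟨u,v⟩ ≥ 0 and κ(F)·|det(u,v)| ≤ ‖u‖·‖v‖ (i.e. κ(F)·sin|∠(u,v)| ≤ 1), then u and v form an F-acute angle. -/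
open scoped RealInnerProductSpace
open MeasureTheory Real

noncomputable section

/- ### Auxiliary lemmas -/

lemma asym_subadd {F : E2 → ℝ} (hF : IsAsymNorm F) (x y : E2) :
    F (x + y) ≤ F x + F y := by
  have h2 : F ((2:ℝ) • ((1/2 : ℝ) • x + (1/2 : ℝ) • y)) = 2 * F ((1/2 : ℝ) • x + (1/2 : ℝ) • y) :=
    hF.2.1 2 (by norm_num) _
  have hx : ((2:ℝ) • ((1/2 : ℝ) • x + (1/2 : ℝ) • y)) = x + y := by
    rw [smul_add, smul_smul, smul_smul]; norm_num
  have hc := hF.1.2 (Set.mem_univ x) (Set.mem_univ y) (by norm_num : (0:ℝ) ≤ 1/2)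
    (by norm_num : (0:ℝ) ≤ 1/2) (by norm_num)
  rw [← hx, h2]
  simp only [smul_eq_mul] at hc
  linarith

lemma asym_subgrad {F : E2 → ℝ} (hF : IsAsymNorm F) (u : E2) (hu : u ≠ 0) :
    ∃ g : E2 →ₗ[ℝ] ℝ, g u = F u ∧ ∀ x, g x ≤ F x := by
  set f : E2 →ₗ.[ℝ] ℝ := LinearPMap.mkSpanSingleton u (F u) hu with hf
  obtain ⟨g, hg1, hg2⟩ := exists_extension_of_le_sublinear f F
    (fun c hc x => hF.2.1 c hc.le x)
    (asym_subadd hF)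
    (by
      rintro ⟨x, hx⟩
      obtain ⟨c, rfl⟩ := Submodule.mem_span_singleton.1 hx
      have hfc : f ⟨c • u, hx⟩ = c • F u := LinearPMap.mkSpanSingleton'_apply _ _ _ c _
      rw [hfc]
      rcases le_or_gt 0 c with h | h
      · rw [hF.2.1 c h u]; simp [smul_eq_mul]
      · have hcu : c • F u ≤ 0 := by
          rw [smul_eq_mul]
          exact mul_nonpos_of_nonpos_of_nonneg h.le (hF.2.2.1 u)
        exact hcu.trans (hF.2.2.1 _))
  refine ⟨g, ?_, hg2⟩
  have := hg1 ⟨u, Submodule.mem_span_singleton_self u⟩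
  rwa [LinearPMap.mkSpanSingleton_apply] at this

lemma asym_bounds {F : E2 → ℝ} (hF : IsAsymNorm F) :
    ∃ m M : ℝ, 0 < m ∧ m ≤ M ∧ (∀ x : E2, m * ‖x‖ ≤ F x) ∧ (∀ x : E2, F x ≤ M * ‖x‖) ∧
      M / m ≤ kappa F := by
  have hcont : Continuous F := by
    have := hF.1.continuousOn isOpen_univ
    rwa [← continuousOn_univ]
  have hcomp : IsCompact (Metric.sphere (0:E2) 1) := isCompact_sphere 0 1
  have hne : (Metric.sphere (0:E2) 1).Nonempty := by
    refine ⟨mk2 1 0, ?_⟩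
    rw [mem_sphere_zero_iff_norm]
    simp [EuclideanSpace.norm_eq, Fin.sum_univ_two, mk2]
  obtain ⟨xm, hxm, hmin⟩ := hcomp.exists_isMinOn hne hcont.continuousOn
  obtain ⟨xM, hxM, hmax⟩ := hcomp.exists_isMaxOn hne hcont.continuousOn
  set m := F xm with hm
  set M := F xM with hM
  have hxm1 : ‖xm‖ = 1 := mem_sphere_zero_iff_norm.1 hxm
  have hxM1 : ‖xM‖ = 1 := mem_sphere_zero_iff_norm.1 hxM
  have hmpos : 0 < m := hF.2.2.2 xm (by intro h; rw [h] at hxm1; simp at hxm1)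
  have hF0 : F 0 = 0 := by
    have := hF.2.1 0 le_rfl 0; simpa using this
  have hunit : ∀ x : E2, x ≠ 0 → F x = ‖x‖ * F (‖x‖⁻¹ • x) := by
    intro x hx
    have hn : ‖x‖ ≠ 0 := norm_ne_zero_iff.2 hx
    have := hF.2.1 ‖x‖ (norm_nonneg x) (‖x‖⁻¹ • x)
    rw [smul_smul, mul_inv_cancel₀ hn, one_smul] at this
    rw [this]
  have hmem : ∀ x : E2, x ≠ 0 → ‖x‖⁻¹ • x ∈ Metric.sphere (0:E2) 1 := by
    intro x hx
    rw [mem_sphere_zero_iff_norm, norm_smul, norm_inv, norm_norm,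
      inv_mul_cancel₀ (norm_ne_zero_iff.2 hx)]
  have hlow : ∀ x : E2, m * ‖x‖ ≤ F x := by
    intro x
    rcases eq_or_ne x 0 with rfl | hx
    · simp [hF0]
    · rw [hunit x hx]
      have h1 := hmin (hmem x hx)
      have hn : 0 ≤ ‖x‖ := norm_nonneg x
      calc m * ‖x‖ ≤ F (‖x‖⁻¹ • x) * ‖x‖ := mul_le_mul_of_nonneg_right h1 hn
        _ = ‖x‖ * F (‖x‖⁻¹ • x) := mul_comm _ _
  have hhigh : ∀ x : E2, F x ≤ M * ‖x‖ := by
    intro x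
    rcases eq_or_ne x 0 with rfl | hx
    · simp [hF0]
    · rw [hunit x hx]
      have h1 := hmax (hmem x hx)
      have hn : 0 ≤ ‖x‖ := norm_nonneg x
      calc ‖x‖ * F (‖x‖⁻¹ • x) ≤ ‖x‖ * M := mul_le_mul_of_nonneg_left h1 hn
        _ = M * ‖x‖ := mul_comm _ _
  have hmM : m ≤ M := hmin hxM
  refine ⟨m, M, hmpos, hmM, hlow, hhigh, ?_⟩
  apply le_csSup
  · refine ⟨M / m, ?_⟩
    rintro r ⟨a, b, ha, hb, rfl⟩
    have hFa : F a ≤ M := by have := hhigh a; rwa [ha, mul_one] at this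
    have hFb : m ≤ F b := by have := hlow b; rwa [hb, mul_one] at this
    exact div_le_div₀ (le_trans hmpos.le hmM) hFa hmpos hFb
  · exact ⟨xM, xm, hxM1, hxm1, rfl⟩

lemma key_pos (p d gu q gv m M nu nv : ℝ)
    (hm : 0 < m) (hmM : m ≤ M) (hnu : 0 < nu)
    (lag1 : p^2 + d^2 = nu^2 * nv^2)
    (lag2 : q^2 + gu^2 ≤ M^2 * nu^2)
    (hgu : m * nu ≤ gu)
    (hp : 0 ≤ p)
    (hd : M * |d| ≤ m * (nu * nv))
    (hid : nu^2 * gv = p * gu + d * q) :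
    0 ≤ gv := by
  have hM : 0 < M := hm.trans_le hmM
  have hgu0 : 0 ≤ gu := le_trans (by positivity) hgu
  have hgu2 : m^2 * nu^2 ≤ gu^2 :=
    by nlinarith [mul_self_le_mul_self (by positivity : (0:ℝ) ≤ m * nu) hgu]
  have hq2 : q^2 ≤ (M^2 - m^2) * nu^2 := by nlinarith
  have hd2 : M^2 * d^2 ≤ m^2 * (nu^2 * nv^2) := by
    have h1 : 0 ≤ M * |d| := by positivity
    have h2 := mul_self_le_mul_self h1 hd
    have habs : |d| * |d| = d^2 := by rw [← abs_mul, abs_mul_self]; ring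
    nlinarith [h2]
  have hkey : (M^2 - m^2) * d^2 ≤ m^2 * p^2 := by nlinarith
  have hdq : |d * q| ≤ p * (m * nu) := by
    have h1 : (d * q)^2 ≤ (p * (m * nu))^2 := by nlinarith [sq_nonneg d, sq_nonneg q, sq_nonneg p]
    have h2 : 0 ≤ p * (m * nu) := by positivity
    calc |d * q| = Real.sqrt ((d * q)^2) := (Real.sqrt_sq_eq_abs _).symm
      _ ≤ Real.sqrt ((p * (m * nu))^2) := Real.sqrt_le_sqrt h1
      _ = p * (m * nu) := by rw [Real.sqrt_sq h2]
  have hfinal : 0 ≤ nu^2 * gv := by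
    rw [hid]
    have h1 : p * (m * nu) ≤ p * gu := mul_le_mul_of_nonneg_left hgu hp
    have h2 : -(p * (m * nu)) ≤ d * q :=
      le_trans (by linarith [hdq] : -(p * (m * nu)) ≤ -|d * q|) (neg_abs_le _)
    linarith
  exact le_of_mul_le_mul_left (by linarith : nu^2 * 0 ≤ nu^2 * gv) (pow_pos hnu 2)

lemma one_side (F : E2 → ℝ) (hF : IsAsymNorm F) (u v : E2) (hu : u ≠ 0)
    (hs : 0 ≤ ⟪u, v⟫) (hκ : kappa F * |det2 u v| ≤ ‖u‖ * ‖v‖) :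
    ∀ δ : ℝ, 0 ≤ δ → F u ≤ F (u + δ • v) := by
  obtain ⟨m, M, hm, hmM, hlow, hhigh, hκ'⟩ := asym_bounds hF
  obtain ⟨g, hgu, hgle⟩ := asym_subgrad hF u hu
  set a := g (mk2 1 0) with ha
  set b := g (mk2 0 1) with hb
  have hgx : ∀ x : E2, g x = x 0 * a + x 1 * b := by
    intro x
    have hxd : x = x 0 • mk2 1 0 + x 1 • mk2 0 1 := by
      ext i; fin_cases i <;> simp [mk2]
    conv_lhs => rw [hxd]
    rw [g.map_add, g.map_smul, g.map_smul, smul_eq_mul, smul_eq_mul]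
  set nu := ‖u‖ with hnu
  set nv := ‖v‖ with hnv
  have hnupos : 0 < nu := norm_pos_iff.2 hu
  have hnvnn : 0 ≤ nv := norm_nonneg v
  have icoord : ∀ x y : E2, ⟪x, y⟫ = x 0 * y 0 + x 1 * y 1 := by
    intro x y; simp [PiLp.inner_apply, Fin.sum_univ_two]; ring
  have hnu2 : nu^2 = (u 0)^2 + (u 1)^2 := by
    rw [hnu, ← real_inner_self_eq_norm_sq, icoord]; ring
  have hnv2 : nv^2 = (v 0)^2 + (v 1)^2 := by
    rw [hnv, ← real_inner_self_eq_norm_sq, icoord]; ring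
  -- bound a^2 + b^2 ≤ M^2
  have hab : a^2 + b^2 ≤ M^2 := by
    have hgw : g (mk2 a b) = a^2 + b^2 := by
      rw [hgx]; simp only [mk2]
      simp; ring
    have hnw : ‖mk2 a b‖ = Real.sqrt (a^2 + b^2) := by
      simp [EuclideanSpace.norm_eq, Fin.sum_univ_two, mk2, sq_abs]
    have h1 : a^2 + b^2 ≤ M * Real.sqrt (a^2 + b^2) := by
      calc a^2 + b^2 = g (mk2 a b) := hgw.symm
        _ ≤ F (mk2 a b) := hgle _
        _ ≤ M * ‖mk2 a b‖ := hhigh _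
        _ = M * Real.sqrt (a^2 + b^2) := by rw [hnw]
    have ht : Real.sqrt (a^2 + b^2) ^ 2 = a^2 + b^2 := Real.sq_sqrt (by positivity)
    nlinarith [Real.sqrt_nonneg (a^2 + b^2), hm.trans_le hmM]
  -- g u ≥ m * nu
  have hgul : m * nu ≤ u 0 * a + u 1 * b := by
    rw [← hgx u, hgu]; exact hlow u
  -- hd : M * |det| ≤ m * (nu * nv)
  have hMpos : 0 < M := hm.trans_le hmM
  have hκnn : (0:ℝ) ≤ M / m := by positivity
  have hdet : M * |det2 u v| ≤ m * (nu * nv) := by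
    have h1 : (M / m) * |det2 u v| ≤ kappa F * |det2 u v| :=
      mul_le_mul_of_nonneg_right hκ' (abs_nonneg _)
    have h2 : (M / m) * |det2 u v| ≤ nu * nv := h1.trans hκ
    have h3 : M * |det2 u v| = m * ((M / m) * |det2 u v|) := by
      field_simp
    rw [h3]
    exact mul_le_mul_of_nonneg_left h2 hm.le
  -- positivity of g v
  have hgv : 0 ≤ g v := by
    rw [hgx v]
    refine key_pos (⟪u, v⟫) (det2 u v) (u 0 * a + u 1 * b) (-(u 1) * a + u 0 * b)
      (v 0 * a + v 1 * b) m M nu nv hm hmM hnupos ?_ ?_ hgul hs hdet ?_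
    · rw [icoord, det2, hnu2, hnv2]; ring
    · have hident : (-(u 1) * a + u 0 * b)^2 + (u 0 * a + u 1 * b)^2
          = (a^2 + b^2) * ((u 0)^2 + (u 1)^2) := by ring
      rw [hident, ← hnu2]
      nlinarith [sq_nonneg nu]
    · rw [icoord, det2, hnu2]; ring
  -- conclude
  intro δ hδ
  have hlin : g (u + δ • v) = F u + δ * g v := by
    rw [g.map_add, g.map_smul, hgu, smul_eq_mul]
  have := hgle (u + δ • v)
  have hpos : 0 ≤ δ * g v := mul_nonneg hδ hgv
  linarith [hlin ▸ this]

/-- if `⟨u,v⟩ ≥ 0` and `κ(F)·|det(u,v)| ≤ ‖u‖·‖v‖`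
(i.e. `κ(F)·sin|∠(u,v)| ≤ 1`), then `u` and `v` form an `F`-acute angle. -/
theorem stmt5 (F : E2 → ℝ) (hF : IsAsymNorm F) (u v : E2) (hu : u ≠ 0) (hv : v ≠ 0)
    (hs : 0 ≤ ⟪u, v⟫) (hκ : kappa F * |det2 u v| ≤ ‖u‖ * ‖v‖) :
    IsAcute F u v := by
  have hs' : 0 ≤ ⟪v, u⟫ := by rwa [real_inner_comm]
  have hdet' : |det2 v u| = |det2 u v| := by
    have : det2 v u = -(det2 u v) := by simp [det2]; ring
    rw [this, abs_neg]
  have hκ' : kappa F * |det2 v u| ≤ ‖v‖ * ‖u‖ := by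
    rwa [hdet', mul_comm ‖v‖]
  intro δ hδ
  exact ⟨one_side F hF u v hu hs hκ δ hδ, one_side F hF v u hv hs' hκ' δ hδ⟩

end
end

section
/- Let F be an asymmetric norm on ℝ² that is C¹ on ℝ² ∖ {0}. Then for all θ ∈ ℝ, cos φ_F(θ) ≥ 1/κ(F); equivalently, ‖∇F(e_θ)‖ ≤ κ(F)·F(e_θ). -/
open scoped RealInnerProductSpace
open MeasureTheory Real

noncomputable section

open Filter Set Topology

set_option maxHeartbeats 1000000 in
/-- `cos φ_F(θ) ≥ 1/κ(F)` for all `θ`; equivalently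
`‖∇F(e_θ)‖ ≤ κ(F)·F(e_θ)`. -/
theorem stmt13 (F : E2 → ℝ) (hF : IsAsymNorm F) (hC1 : ContDiffOn ℝ 1 F {(0 : E2)}ᶜ) :
    ∀ θ : ℝ, (kappa F)⁻¹ ≤ Real.cos (phiF F θ) ∧
      ‖gradient F (eTheta θ)‖ ≤ kappa F * F (eTheta θ) := by
  obtain ⟨hconv, hhom, hnn, hpos⟩ := hF
  intro θ
  set e : E2 := eTheta θ with he_def
  have he1 : ‖e‖ = 1 := by
    rw [he_def, EuclideanSpace.norm_eq]
    simp [Fin.sum_univ_two, eTheta, mk2, Real.norm_eq_abs, sq_abs, Real.sin_sq_add_cos_sq]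
  have he0 : e ≠ 0 := by
    intro h; rw [h, norm_zero] at he1; norm_num at he1
  have hFe : 0 < F e := hpos e he0
  set g : E2 := gradient F e with hg_def
  -- differentiability
  have hmem : ({(0 : E2)}ᶜ : Set E2) ∈ nhds e := isOpen_compl_singleton.mem_nhds he0
  have hdiff : DifferentiableAt ℝ F e :=
    ((hC1.contDiffAt hmem).differentiableAt one_ne_zero)
  have hgrad : HasGradientAt F g e := hdiff.hasGradientAt
  -- directional derivatives
  have hdir : ∀ w : E2, HasDerivAt (fun t : ℝ => F (e + t • w)) ⟪g, w⟫ 0 := by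
    intro w
    have hline : HasDerivAt (fun t : ℝ => e + t • w) w 0 := by
      simpa using ((hasDerivAt_id (0 : ℝ)).smul_const w).const_add e
    have hF' : HasFDerivAt F (InnerProductSpace.toDual ℝ E2 g) ((fun t : ℝ => e + t • w) 0) := by
      simpa using hgrad.hasFDerivAt
    have := hF'.comp_hasDerivAt 0 hline
    simp [Function.comp] at this; exact this
  -- Euler's relation
  have heuler : ⟪g, e⟫ = F e := by
    have h1 : HasDerivAt (fun t : ℝ => F (e + t • e)) ⟪g, e⟫ 0 := hdir e
    have h2 : HasDerivAt (fun t : ℝ => (1 + t) * F e) (F e) 0 := by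
      simpa using ((hasDerivAt_id (0 : ℝ)).const_add 1).mul_const (F e)
    have heq : (fun t : ℝ => F (e + t • e)) =ᶠ[nhds (0 : ℝ)] fun t => (1 + t) * F e := by
      filter_upwards [Ioi_mem_nhds (show (-1 : ℝ) < 0 by norm_num)] with t ht
      have ht' : (0 : ℝ) ≤ 1 + t := by have := Set.mem_Ioi.mp ht; linarith
      have h3 : e + t • e = (1 + t) • e := by rw [add_smul, one_smul, add_comm]
      rw [h3, hhom _ ht']
    exact (h1.unique (h2.congr_of_eventuallyEq heq)).symm ▸ rfl
  -- subgradient inequality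
  have hsub : ∀ v : E2, ⟪g, v⟫ ≤ F v := by
    intro v
    have hd := hdir (v - e)
    have hslope : Tendsto (fun t : ℝ => (F (e + t • (v - e)) - F e) / t)
        (nhdsWithin (0 : ℝ) (Set.Ioi 0)) (nhds ⟪g, v - e⟫) := by
      have h1 : Tendsto (slope (fun t : ℝ => F (e + t • (v - e))) 0)
          (nhdsWithin (0 : ℝ) {(0 : ℝ)}ᶜ) (nhds ⟪g, v - e⟫) :=
        hasDerivAt_iff_tendsto_slope.mp hd
      have h2 := h1.mono_left (nhdsWithin_mono 0 (fun x hx => Set.mem_compl_singleton_iff.mpr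
        (ne_of_gt (Set.mem_Ioi.mp hx))))
      refine h2.congr' ?_
      filter_upwards [self_mem_nhdsWithin] with t ht
      simp [slope_def_field, div_eq_inv_mul]
    have hbound : ∀ᶠ t in nhdsWithin (0 : ℝ) (Set.Ioi 0),
        (F (e + t • (v - e)) - F e) / t ≤ F v - F e := by
      filter_upwards [Ioo_mem_nhdsGT_of_mem (Set.left_mem_Ico.mpr one_pos)] with t ht
      obtain ⟨ht0, ht1⟩ := ht
      have hcvx := hconv.2 (Set.mem_univ e) (Set.mem_univ v)
        (by linarith : (0:ℝ) ≤ 1 - t) (le_of_lt ht0) (by ring)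
      have harg : (1 - t) • e + t • v = e + t • (v - e) := by
        rw [smul_sub, sub_smul, one_smul]; abel
      rw [harg] at hcvx
      simp only [smul_eq_mul] at hcvx
      rw [div_le_iff₀ ht0]
      nlinarith
    have := le_of_tendsto hslope hbound
    have hinner : ⟪g, v - e⟫ = ⟪g, v⟫ - ⟪g, e⟫ := inner_sub_right g v e
    rw [hinner, heuler] at this
    linarith
  -- g ≠ 0
  have hgne : g ≠ 0 := by
    intro h
    rw [h, inner_zero_left] at heuler
    linarith
  have hgpos : 0 < ‖g‖ := norm_pos_iff.mpr hgne
  -- kappa : bddAbove and bounds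
  set S := {r : ℝ | ∃ u v : E2, ‖u‖ = 1 ∧ ‖v‖ = 1 ∧ r = F u / F v} with hS_def
  have hsphere : (Metric.sphere (0 : E2) 1).Nonempty :=
    NormedSpace.sphere_nonempty.mpr zero_le_one
  have hFcont : ContinuousOn F (Metric.sphere (0 : E2) 1) := by
    refine hC1.continuousOn.mono ?_
    intro x hx
    simp only [Set.mem_compl_iff, Set.mem_singleton_iff]
    intro h
    rw [Metric.mem_sphere, h] at hx
    simp at hx
  obtain ⟨uM, huM, hM⟩ := (isCompact_sphere (0 : E2) 1).exists_isMaxOn hsphere hFcont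
  obtain ⟨um, hum, hm⟩ := (isCompact_sphere (0 : E2) 1).exists_isMinOn hsphere hFcont
  have humne : um ≠ 0 := by
    intro h; rw [Metric.mem_sphere, h] at hum; simp at hum
  have hmpos : 0 < F um := hpos um humne
  have hbdd : BddAbove S := by
    refine ⟨F uM / F um, ?_⟩
    rintro r ⟨u, v, hu, hv, rfl⟩
    have hu' : u ∈ Metric.sphere (0 : E2) 1 := by simpa [Metric.mem_sphere, dist_zero_right] using hu
    have hv' : v ∈ Metric.sphere (0 : E2) 1 := by simpa [Metric.mem_sphere, dist_zero_right] using hv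
    exact div_le_div₀ (le_trans (hnn uM) (le_refl _)) (hM hu') hmpos (hm hv')
  -- main bound : ‖g‖ ≤ kappa F * F e
  set v : E2 := ‖g‖⁻¹ • g with hv_def
  have hv1 : ‖v‖ = 1 := norm_smul_inv_norm hgne
  have hgv : ⟪g, v⟫ = ‖g‖ := by
    rw [hv_def, real_inner_smul_right, real_inner_self_eq_norm_sq, sq]
    field_simp
  have hkv : F v / F e ≤ kappa F := le_csSup hbdd ⟨v, e, hv1, he1, rfl⟩
  have hmain : ‖g‖ ≤ kappa F * F e := by
    have h1 : ‖g‖ ≤ F v := by rw [← hgv]; exact hsub v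
    have h2 : F v = (F v / F e) * F e := by field_simp
    calc ‖g‖ ≤ F v := h1
      _ = (F v / F e) * F e := h2
      _ ≤ kappa F * F e := mul_le_mul_of_nonneg_right hkv (le_of_lt hFe)
  refine ⟨?_, hmain⟩
  -- now the cosine part
  have hkpos : 0 < kappa F := by
    have h1 : (1 : ℝ) ∈ S := ⟨e, e, he1, he1, (div_self (ne_of_gt hFe)).symm⟩
    have h2 : (1 : ℝ) ≤ kappa F := le_csSup hbdd h1
    linarith
  -- norm decomposition
  have hinner_e : ⟪g, e⟫ = Real.cos θ * g 0 + Real.sin θ * g 1 := by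
    rw [real_inner_comm]
    simp [PiLp.inner_apply, Fin.sum_univ_two, he_def, eTheta, mk2]; ring
  have hdet : det2 e g = Real.cos θ * g 1 - Real.sin θ * g 0 := by
    simp [det2, he_def, eTheta, mk2]
  have hnormg : ‖g‖ ^ 2 = F e ^ 2 + det2 e g ^ 2 := by
    have h1 : ‖g‖ ^ 2 = g 0 * g 0 + g 1 * g 1 := by
      rw [← real_inner_self_eq_norm_sq]
      simp only [PiLp.inner_apply, Fin.sum_univ_two, RCLike.inner_apply, conj_trivial]
    rw [h1, ← heuler, hinner_e, hdet]
    have hcs := Real.sin_sq_add_cos_sq θ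
    nlinarith [hcs]
  have hphi : Real.cos (phiF F θ) = F e / ‖g‖ := by
    have harg : phiF F θ = Real.arctan (det2 e g / F e) := rfl
    rw [harg, Real.cos_arctan]
    have h1 : 1 + (det2 e g / F e) ^ 2 = (‖g‖ / F e) ^ 2 := by
      rw [div_pow, div_pow, hnormg]
      field_simp
    rw [h1, Real.sqrt_sq (by positivity), one_div, inv_div]
  rw [hphi]
  rw [inv_eq_one_div, div_le_div_iff₀ hkpos hgpos]
  nlinarith [hmain]
end
end

section
/- Let F, F₁, …, F_r be asymmetric norms on ℝ² that are C¹ on ℝ² ∖ {0}, let u ∈ ℝ² ∖ {0}, and let θ ∈ ℝ be such that e_θ and u are positively collinear. Then the following are equivalent: (a) there exist α₁, …, α_r ≥ 0 such that ∇F(u) = Σ_{i=1}^r α_i ∇F_i(u); (b) min{φ_{F₁}(θ), …, φ_{F_r}(θ)} ≤ φ_F(θ) ≤ max{φ_{F₁}(θ), …, φ_{F_r}(θ)}. -/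
open scoped RealInnerProductSpace
open MeasureTheory Real

noncomputable section

lemma eTheta_ne_zero (θ : ℝ) : eTheta θ ≠ 0 := by
  intro h
  have h0 : Real.cos θ = 0 := by
    have := congrFun (congrArg (fun (v : E2) => (v : Fin 2 → ℝ)) h) 0
    simpa [eTheta, mk2] using this
  have h1 : Real.sin θ = 0 := by
    have := congrFun (congrArg (fun (v : E2) => (v : Fin 2 → ℝ)) h) 1
    simpa [eTheta, mk2] using this
  have := Real.sin_sq_add_cos_sq θ
  rw [h0, h1] at this; norm_num at this

lemma decomp (θ : ℝ) (w : E2) :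
    w = (⟪eTheta θ, w⟫) • eTheta θ + det2 (eTheta θ) w • perp (eTheta θ) := by
  have h := Real.sin_sq_add_cos_sq θ
  ext i
  fin_cases i
  · simp only [eTheta, mk2, perp, det2, PiLp.inner_apply, RCLike.inner_apply, Fin.sum_univ_two,
      PiLp.add_apply, PiLp.smul_apply, smul_eq_mul, conj_trivial, Matrix.cons_val_zero,
      Matrix.cons_val_one, Matrix.head_cons, Fin.mk_zero, Fin.mk_one]
    linear_combination (-(w 0)) * h
  · simp only [eTheta, mk2, perp, det2, PiLp.inner_apply, RCLike.inner_apply, Fin.sum_univ_two,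
      PiLp.add_apply, PiLp.smul_apply, smul_eq_mul, conj_trivial, Matrix.cons_val_zero,
      Matrix.cons_val_one, Matrix.head_cons, Fin.mk_zero, Fin.mk_one]
    linear_combination (-(w 1)) * h

lemma diffAt {F : E2 → ℝ} (hFC1 : ContDiffOn ℝ 1 F {(0:E2)}ᶜ) {x : E2} (hx : x ≠ 0) :
    DifferentiableAt ℝ F x :=
  (hFC1.differentiableOn one_ne_zero).differentiableAt
    (isOpen_compl_singleton.mem_nhds (by simpa using hx))

lemma inner_gradient {F : E2 → ℝ} (x v : E2) :
    ⟪gradient F x, v⟫ = fderiv ℝ F x v := by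
  rw [gradient, InnerProductSpace.toDual_symm_apply]

lemma euler {F : E2 → ℝ} (hF : IsAsymNorm F) (hFC1 : ContDiffOn ℝ 1 F {(0:E2)}ᶜ)
    {x : E2} (hx : x ≠ 0) : ⟪gradient F x, x⟫ = F x := by
  have hd : DifferentiableAt ℝ F x := diffAt hFC1 hx
  have hfd : HasFDerivAt F (fderiv ℝ F x) x := hd.hasFDerivAt
  have h1 : HasDerivAt (fun c : ℝ => c • x) x 1 := by
    simpa using (hasDerivAt_id (1:ℝ)).smul_const x
  have hline : HasDerivAt (fun c : ℝ => F (c • x)) (fderiv ℝ F x x) 1 := by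
    have hfd' : HasFDerivAt F (fderiv ℝ F x) ((1:ℝ) • x) := by simpa using hfd
    exact hfd'.comp_hasDerivAt (1:ℝ) h1
  have heq : (fun c : ℝ => F (c • x)) =ᶠ[nhds (1:ℝ)] fun c : ℝ => c * F x := by
    filter_upwards [eventually_gt_nhds (show (0:ℝ) < 1 by norm_num)] with c hc
    exact hF.2.1 c hc.le x
  have hline2 : HasDerivAt (fun c : ℝ => c * F x) (fderiv ℝ F x x) 1 :=
    hline.congr_of_eventuallyEq heq.symm
  have : fderiv ℝ F x x = F x := hline2.unique (hasDerivAt_mul_const (F x))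
  rw [inner_gradient, this]

lemma grad_homog {F : E2 → ℝ} (hF : IsAsymNorm F) (hFC1 : ContDiffOn ℝ 1 F {(0:E2)}ᶜ)
    {x : E2} (hx : x ≠ 0) {c : ℝ} (hc : 0 < c) :
    gradient F (c • x) = gradient F x := by
  have hcx : c • x ≠ 0 := smul_ne_zero hc.ne' hx
  have hd : DifferentiableAt ℝ F x := diffAt hFC1 hx
  have hd' : DifferentiableAt ℝ F (c • x) := diffAt hFC1 hcx
  set L := fderiv ℝ F x with hLdef
  have hL : HasFDerivAt F L x := hd.hasFDerivAt
  have hmap : HasFDerivAt (fun y : E2 => c⁻¹ • y)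
      (c⁻¹ • ContinuousLinearMap.id ℝ E2) (c • x) :=
    (hasFDerivAt_id _).const_smul c⁻¹
  have hLx : HasFDerivAt F L ((fun y : E2 => c⁻¹ • y) (c • x)) := by
    simpa [inv_smul_smul₀ hc.ne'] using hL
  have hcomp : HasFDerivAt (fun y : E2 => F (c⁻¹ • y))
      (L.comp (c⁻¹ • ContinuousLinearMap.id ℝ E2)) (c • x) := hLx.comp (c • x) hmap
  have hmul : HasFDerivAt (fun y : E2 => c * F (c⁻¹ • y))
      (c • (L.comp (c⁻¹ • ContinuousLinearMap.id ℝ E2))) (c • x) := hcomp.const_mul c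
  have hfun : (fun y : E2 => c * F (c⁻¹ • y)) = F := by
    funext y
    rw [← hF.2.1 c hc.le (c⁻¹ • y), smul_inv_smul₀ hc.ne']
  have hCLM : c • (L.comp (c⁻¹ • ContinuousLinearMap.id ℝ E2)) = L := by
    ext v
    simp [ContinuousLinearMap.smul_apply, _root_.map_smul, smul_eq_mul]
    field_simp
  have : HasFDerivAt F L (c • x) := by rw [← hfun, ← hCLM]; exact hmul
  have hfe : fderiv ℝ F (c • x) = L := this.fderiv
  rw [gradient, gradient, hfe]

lemma det2_sum {ι : Type*} (s : Finset ι) (e : E2) (g : ι → E2) (α : ι → ℝ) :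
    det2 e (∑ i ∈ s, α i • g i) = ∑ i ∈ s, α i * det2 e (g i) := by
  simp only [det2]
  have h0 : (∑ i ∈ s, α i • g i) 0 = ∑ i ∈ s, α i * g i 0 := by
    rw [WithLp.ofLp_sum, Finset.sum_apply]; rfl
  have h1 : (∑ i ∈ s, α i • g i) 1 = ∑ i ∈ s, α i * g i 1 := by
    rw [WithLp.ofLp_sum, Finset.sum_apply]; rfl
  rw [h0, h1, Finset.mul_sum, Finset.mul_sum, ← Finset.sum_sub_distrib]
  exact Finset.sum_congr rfl fun i _ => by ring

lemma sum_one {r : ℕ} (j : Fin r) (cj : ℝ) (f : Fin r → ℝ) :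
    ∑ i, (if i = j then cj else 0) * f i = cj * f j := by
  have : ∀ i, (if i = j then cj else 0) * f i = if i = j then cj * f i else 0 := by
    intro i; split <;> simp
  simp only [this, Finset.sum_ite_eq' Finset.univ j, Finset.mem_univ, if_true]

lemma sum_two {r : ℕ} {j k : Fin r} (hjk : j ≠ k) (cj ck : ℝ) (f : Fin r → ℝ) :
    ∑ i, (if i = j then cj else if i = k then ck else 0) * f i = cj * f j + ck * f k := by
  have : ∀ i, (if i = j then cj else if i = k then ck else 0) * f i
      = (if i = j then cj else 0) * f i + (if i = k then ck else 0) * f i := by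
    intro i
    rcases eq_or_ne i j with rfl | hij
    · simp [hjk]
    · simp [hij]
  simp only [this, Finset.sum_add_distrib, sum_one]

/-- for asymmetric norms `F, F₁, …, F_r ∈ C¹(ℝ² ∖ {0})`, `u ≠ 0`
positively collinear to `e_θ`, the gradient `∇F(u)` is a non-negative combination of
the `∇F_i(u)` iff `min_i φ_{F_i}(θ) ≤ φ_F(θ) ≤ max_i φ_{F_i}(θ)`. -/
theorem stmt14 (r : ℕ) (hr : 0 < r) (F : E2 → ℝ) (Fs : Fin r → E2 → ℝ)
    (hF : IsAsymNorm F) (hFC1 : ContDiffOn ℝ 1 F {(0 : E2)}ᶜ)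
    (hFs : ∀ i, IsAsymNorm (Fs i)) (hFsC1 : ∀ i, ContDiffOn ℝ 1 (Fs i) {(0 : E2)}ᶜ)
    (u : E2) (hu : u ≠ 0) (θ : ℝ) (hθ : ∃ c : ℝ, 0 < c ∧ u = c • eTheta θ) :
    (∃ α : Fin r → ℝ, (∀ i, 0 ≤ α i) ∧
        gradient F u = ∑ i, α i • gradient (Fs i) u) ↔
    ((∃ i, phiF (Fs i) θ ≤ phiF F θ) ∧ (∃ i, phiF F θ ≤ phiF (Fs i) θ)) := by
  obtain ⟨c, hc, rfl⟩ := hθ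
  have hene : eTheta θ ≠ 0 := eTheta_ne_zero θ
  have hgF : gradient F (c • eTheta θ) = gradient F (eTheta θ) := grad_homog hF hFC1 hene hc
  have hgFs : ∀ i, gradient (Fs i) (c • eTheta θ) = gradient (Fs i) (eTheta θ) :=
    fun i => grad_homog (hFs i) (hFsC1 i) hene hc
  set e := eTheta θ with hedef
  set a := F e with hadef
  set b := det2 e (gradient F e) with hbdef
  set A := fun i => Fs i e with hAdef
  set B := fun i => det2 e (gradient (Fs i) e) with hBdef
  have ha : 0 < a := hF.2.2.2 e hene
  have hA : ∀ i, 0 < A i := fun i => (hFs i).2.2.2 e hene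
  have hInF : ⟪e, gradient F e⟫ = a := by
    rw [real_inner_comm]; exact euler hF hFC1 hene
  have hInFs : ∀ i, ⟪e, gradient (Fs i) e⟫ = A i := fun i => by
    rw [real_inner_comm]; exact euler (hFs i) (hFsC1 i) hene
  have hdecF : gradient F e = a • e + b • perp e := by
    conv_lhs => rw [decomp θ (gradient F e)]
    rw [hInF]
  have hdecFs : ∀ i, gradient (Fs i) e = A i • e + B i • perp e := fun i => by
    conv_lhs => rw [decomp θ (gradient (Fs i) e)]
    rw [hInFs i]
  -- Step 1: reduce to scalar equations
  have hLHS : (∃ α : Fin r → ℝ, (∀ i, 0 ≤ α i) ∧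
      gradient F (c • e) = ∑ i, α i • gradient (Fs i) (c • e)) ↔
      (∃ α : Fin r → ℝ, (∀ i, 0 ≤ α i) ∧ (∑ i, α i * A i = a) ∧ (∑ i, α i * B i = b)) := by
    simp only [hgF, hgFs]
    constructor
    · rintro ⟨α, hα, hsum⟩
      refine ⟨α, hα, ?_, ?_⟩
      · have h := congrArg (fun w => (⟪e, w⟫ : ℝ)) hsum
        simp only [inner_sum, real_inner_smul_right, hInF, hInFs] at h
        exact h.symm
      · have h := congrArg (fun w => det2 e w) hsum
        rw [det2_sum] at h
        exact h.symm
    · rintro ⟨α, hα, h1, h2⟩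
      refine ⟨α, hα, ?_⟩
      calc gradient F e = a • e + b • perp e := hdecF
        _ = ∑ i, α i • (A i • e + B i • perp e) := by
            simp only [smul_add, Finset.sum_add_distrib, smul_smul, ← Finset.sum_smul, h1, h2]
        _ = ∑ i, α i • gradient (Fs i) e := by
            exact Finset.sum_congr rfl fun i _ => by rw [hdecFs i]
  rw [hLHS]
  -- Step 2: rewrite RHS via cross-products
  have key1 : ∀ i, (phiF (Fs i) θ ≤ phiF F θ ↔ B i * a ≤ b * A i) := by
    intro i
    show Real.arctan (B i / A i) ≤ Real.arctan (b / a) ↔ _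
    rw [Real.arctan_strictMono.le_iff_le, div_le_div_iff₀ (hA i) ha]
  have key2 : ∀ i, (phiF F θ ≤ phiF (Fs i) θ ↔ b * A i ≤ B i * a) := by
    intro i
    show Real.arctan (b / a) ≤ Real.arctan (B i / A i) ↔ _
    rw [Real.arctan_strictMono.le_iff_le, div_le_div_iff₀ ha (hA i)]
  simp only [key1, key2]
  -- Step 3: main scalar equivalence
  constructor
  · rintro ⟨α, hα, h1, h2⟩
    have hex : ∃ j, 0 < α j := by
      by_contra h
      push_neg at h
      have hz : ∀ i, α i = 0 := fun i => le_antisymm (h i) (hα i)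
      have : (∑ i, α i * A i) = 0 := Finset.sum_eq_zero fun i _ => by rw [hz i]; ring
      rw [h1] at this; linarith
    obtain ⟨j, hj⟩ := hex
    constructor
    · by_contra hcon
      push_neg at hcon
      have hlt : ∑ i, α i * (b * A i) < ∑ i, α i * (B i * a) :=
        Finset.sum_lt_sum (fun i _ => mul_le_mul_of_nonneg_left (hcon i).le (hα i))
          ⟨j, Finset.mem_univ j, mul_lt_mul_of_pos_left (hcon j) hj⟩
      have e1 : ∑ i, α i * (b * A i) = b * a := by
        rw [show (∑ i, α i * (b * A i)) = b * ∑ i, α i * A i by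
          rw [Finset.mul_sum]; exact Finset.sum_congr rfl fun i _ => by ring, h1]
      have e2 : ∑ i, α i * (B i * a) = b * a := by
        rw [show (∑ i, α i * (B i * a)) = (∑ i, α i * B i) * a by
          rw [Finset.sum_mul]; exact Finset.sum_congr rfl fun i _ => by ring, h2]
      rw [e1, e2] at hlt; exact lt_irrefl _ hlt
    · by_contra hcon
      push_neg at hcon
      have hlt : ∑ i, α i * (B i * a) < ∑ i, α i * (b * A i) :=
        Finset.sum_lt_sum (fun i _ => mul_le_mul_of_nonneg_left (hcon i).le (hα i))
          ⟨j, Finset.mem_univ j, mul_lt_mul_of_pos_left (hcon j) hj⟩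
      have e1 : ∑ i, α i * (b * A i) = b * a := by
        rw [show (∑ i, α i * (b * A i)) = b * ∑ i, α i * A i by
          rw [Finset.mul_sum]; exact Finset.sum_congr rfl fun i _ => by ring, h1]
      have e2 : ∑ i, α i * (B i * a) = b * a := by
        rw [show (∑ i, α i * (B i * a)) = (∑ i, α i * B i) * a by
          rw [Finset.sum_mul]; exact Finset.sum_congr rfl fun i _ => by ring, h2]
      rw [e1, e2] at hlt; exact lt_irrefl _ hlt
  · rintro ⟨⟨j, hjle⟩, ⟨k, hkle⟩⟩
    rcases eq_or_lt_of_le hjle with hje | hjlt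
    · refine ⟨fun i => if i = j then a / A j else 0, ?_, ?_, ?_⟩
      · intro i; dsimp only; split
        · exact div_nonneg ha.le (hA j).le
        · exact le_rfl
      · show ∑ i, (if i = j then a / A j else 0) * A i = a
        rw [sum_one j (a / A j) A]
        have hAj := (hA j).ne'
        field_simp
      · show ∑ i, (if i = j then a / A j else 0) * B i = b
        rw [sum_one j (a / A j) B]
        have hAj := (hA j).ne'
        field_simp
        linear_combination hje
    rcases eq_or_lt_of_le hkle with hke | hklt
    · refine ⟨fun i => if i = k then a / A k else 0, ?_, ?_, ?_⟩
      · intro i; dsimp only; split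
        · exact div_nonneg ha.le (hA k).le
        · exact le_rfl
      · show ∑ i, (if i = k then a / A k else 0) * A i = a
        rw [sum_one k (a / A k) A]
        have hAk := (hA k).ne'
        field_simp
      · show ∑ i, (if i = k then a / A k else 0) * B i = b
        rw [sum_one k (a / A k) B]
        have hAk := (hA k).ne'
        field_simp
        linear_combination -hke
    · have hjk : j ≠ k := by
        rintro rfl; linarith
      set t := b / a with htdef
      set tj := B j / A j with htjdef
      set tk := B k / A k with htkdef
      have hjt : tj < t := (div_lt_div_iff₀ (hA j) ha).2 hjlt
      have hkt : t < tk := (div_lt_div_iff₀ ha (hA k)).2 hklt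
      have hden : (0:ℝ) < tk - tj := by linarith
      set lam := (tk - t) / (tk - tj) with hlamdef
      have hlam0 : 0 < lam := div_pos (by linarith) hden
      have hlam1 : lam < 1 := (div_lt_one hden).2 (by linarith)
      refine ⟨fun i => if i = j then lam * a / A j else if i = k then (1 - lam) * a / A k else 0,
        ?_, ?_, ?_⟩
      · intro i
        dsimp only
        rcases eq_or_ne i j with rfl | hij
        · simp only [if_pos rfl]
          exact div_nonneg (mul_nonneg hlam0.le ha.le) (hA i).le
        · rw [if_neg hij]
          rcases eq_or_ne i k with rfl | hik
          · rw [if_pos rfl]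
            exact div_nonneg (mul_nonneg (by linarith) ha.le) (hA i).le
          · rw [if_neg hik]
      · show ∑ i, (if i = j then lam * a / A j else if i = k then (1 - lam) * a / A k else 0) * A i = a
        rw [sum_two hjk (lam * a / A j) ((1 - lam) * a / A k) A]
        rw [div_mul_cancel₀ _ (hA j).ne', div_mul_cancel₀ _ (hA k).ne']
        ring
      · show ∑ i, (if i = j then lam * a / A j else if i = k then (1 - lam) * a / A k else 0) * B i = b
        rw [sum_two hjk (lam * a / A j) ((1 - lam) * a / A k) B]
        have hAj := (hA j).ne'
        have hAk := (hA k).ne'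
        have hBj : tj * A j = B j := by rw [htjdef]; exact div_mul_cancel₀ _ hAj
        have hBk : tk * A k = B k := by rw [htkdef]; exact div_mul_cancel₀ _ hAk
        have hb : t * a = b := by rw [htdef]; exact div_mul_cancel₀ _ ha.ne'
        have hlam' : lam * (tk - tj) = tk - t := by
          rw [hlamdef]; exact div_mul_cancel₀ _ hden.ne'
        have s1 : lam * a / A j * B j = lam * a * tj := by
          rw [← hBj]; field_simp
        have s2 : (1 - lam) * a / A k * B k = (1 - lam) * a * tk := by
          rw [← hBk]; field_simp
        rw [s1, s2, ← hb]
        linear_combination (-a) * hlam'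
end
end
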